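/- (Lemma 2(ii)) For every nonempty K ⊆ I and every m ∈ {1,…,M}, there exist sequences of random operators (Φ̂_{ℓ,K|m}^{(n)})_{n≥1} from 𝓔 to ℝ and (Ψ̂_{ℓ,K|m}^{(n)})_{n≥1} from 𝓔 to ℝ^p, for ℓ = 1,…,q, which converge almost surely uniformly (in operator norm) to Φ_{ℓ,K|m} and Ψ_{ℓ,K|m} respectively, such that almost surely for all sufficiently large n: n ξ̂_{K|m}^{(n)} = Σ_{ℓ=1}^q ( Φ̂_{ℓ,K|m}^{(n)}(Ŵ^{(n)}) + p_{ℓ|m} ‖ Ψ̂_{ℓ,K|m}^{(n)}(Ŵ^{(n)}) + √n Δ_{ℓ,K|m} ‖ )². -/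

import Mathlib

open MeasureTheory Filter Finset ProbabilityTheory Matrix

noncomputable section

namespace ArxivStmt

variable {Ω : Type} [MeasurableSpace Ω]

/-- The rank-one operator `u ⊗ v : h ↦ ⟨u, h⟩ v` on `ℝ^p`, as a matrix. -/
def tensor {p : ℕ} (u v : Fin p → ℝ) : Matrix (Fin p) (Fin p) ℝ :=
  Matrix.of fun i j => v i * u j

/-- The coordinate projection `A_K : ℝ^p → ℝ^{card K}`, `x ↦ (x_i)_{i ∈ K}`, as a matrix. -/
def AK {p : ℕ} (K : Finset (Fin p)) : Matrix {x // x ∈ K} (Fin p) ℝ :=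
  Matrix.of fun k j => if (k : Fin p) = j then 1 else 0

/-- `Q_{K} = A_K^* (A_K V A_K^*)⁻¹ A_K`. -/
def QK {p : ℕ} (K : Finset (Fin p)) (V : Matrix (Fin p) (Fin p) ℝ) : Matrix (Fin p) (Fin p) ℝ :=
  (AK K)ᵀ * (AK K * V * (AK K)ᵀ)⁻¹ * AK K

/-- Squared euclidean norm on `ℝ^p`. -/
def esq {p : ℕ} (v : Fin p → ℝ) : ℝ := ∑ i, v i ^ 2

/-- `K_i = I ∖ {i}`. -/
def Kc {p : ℕ} (i : Fin p) : Finset (Fin p) := Finset.univ.erase i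

/-- `p_m = P(U = m)`. -/
def pU {M : ℕ} (P : Measure Ω) (U : Ω → Fin M) (m : Fin M) : ℝ := (P {ω | U ω = m}).toReal

/-- `P(Z = ℓ, U = m)`. -/
def pZU {M q : ℕ} (P : Measure Ω) (U : Ω → Fin M) (Z : Ω → Fin q) (l : Fin q) (m : Fin M) : ℝ :=
  (P {ω | Z ω = l ∧ U ω = m}).toReal

/-- `p_{ℓ|m} = P(Z = ℓ | U = m)`. -/
def pcond {M q : ℕ} (P : Measure Ω) (U : Ω → Fin M) (Z : Ω → Fin q) (l : Fin q) (m : Fin M) : ℝ :=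
  pZU P U Z l m / pU P U m

/-- `μ_m = E(1_{U=m} X) / p_m`. -/
def muU {p M : ℕ} (P : Measure Ω) (X : Ω → Fin p → ℝ) (U : Ω → Fin M) (m : Fin M) :
    Fin p → ℝ :=
  fun i => (pU P U m)⁻¹ * ∫ ω, (if U ω = m then X ω i else 0) ∂P

/-- `μ_{ℓ,m} = E(1_{Z=ℓ,U=m} X) / P(Z=ℓ,U=m)`. -/
def muZU {p M q : ℕ} (P : Measure Ω) (X : Ω → Fin p → ℝ) (U : Ω → Fin M) (Z : Ω → Fin q)
    (l : Fin q) (m : Fin M) : Fin p → ℝ :=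
  fun i => (pZU P U Z l m)⁻¹ * ∫ ω, (if Z ω = l ∧ U ω = m then X ω i else 0) ∂P

/-- `V_m = E(1_{U=m} (X - μ_m) ⊗ (X - μ_m)) / p_m`. -/
def VU {p M : ℕ} (P : Measure Ω) (X : Ω → Fin p → ℝ) (U : Ω → Fin M) (m : Fin M) :
    Matrix (Fin p) (Fin p) ℝ :=
  Matrix.of fun i j => (pU P U m)⁻¹ *
    ∫ ω, (if U ω = m then (X ω i - muU P X U m i) * (X ω j - muU P X U m j) else 0) ∂P

/-- `ξ_{K|m} = Σ_ℓ p_{ℓ|m}² ‖(I - V_m Q_{K|m})(μ_{ℓ,m} - μ_m)‖²`. -/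
def xiKm {p M q : ℕ} (P : Measure Ω) (X : Ω → Fin p → ℝ) (U : Ω → Fin M) (Z : Ω → Fin q)
    (K : Finset (Fin p)) (m : Fin M) : ℝ :=
  ∑ l : Fin q, pcond P U Z l m ^ 2 *
    esq ((1 - VU P X U m * QK K (VU P X U m)) *ᵥ (muZU P X U Z l m - muU P X U m))

/-- `ξ_K = Σ_m p_m² ξ_{K|m}`. -/
def xiK {p M q : ℕ} (P : Measure Ω) (X : Ω → Fin p → ℝ) (U : Ω → Fin M) (Z : Ω → Fin q)
    (K : Finset (Fin p)) : ℝ :=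
  ∑ m : Fin M, pU P U m ^ 2 * xiKm P X U Z K m

/-! Empirical (sample) quantities. -/

/-- `N̂_m^{(n)}`. -/
def NU {M : ℕ} (Us : ℕ → Ω → Fin M) (m : Fin M) (n : ℕ) (ω : Ω) : ℝ :=
  ∑ i ∈ Finset.range n, if Us i ω = m then 1 else 0

/-- `N̂_{ℓ,m}^{(n)}`. -/
def NZU {M q : ℕ} (Us : ℕ → Ω → Fin M) (Zs : ℕ → Ω → Fin q) (l : Fin q) (m : Fin M)
    (n : ℕ) (ω : Ω) : ℝ :=
  ∑ i ∈ Finset.range n, if Zs i ω = l ∧ Us i ω = m then 1 else 0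

/-- `p̂_m^{(n)} = N̂_m^{(n)} / n`. -/
def pUhat {M : ℕ} (Us : ℕ → Ω → Fin M) (m : Fin M) (n : ℕ) (ω : Ω) : ℝ :=
  NU Us m n ω / n

/-- `p̂_{ℓ|m}^{(n)} = N̂_{ℓ,m}^{(n)} / N̂_m^{(n)}`. -/
def pcondhat {M q : ℕ} (Us : ℕ → Ω → Fin M) (Zs : ℕ → Ω → Fin q) (l : Fin q) (m : Fin M)
    (n : ℕ) (ω : Ω) : ℝ :=
  NZU Us Zs l m n ω / NU Us m n ω

/-- `μ̂_m^{(n)}`. -/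
def muUhat {p M : ℕ} (Xs : ℕ → Ω → Fin p → ℝ) (Us : ℕ → Ω → Fin M) (m : Fin M)
    (n : ℕ) (ω : Ω) : Fin p → ℝ :=
  fun j => (NU Us m n ω)⁻¹ * ∑ i ∈ Finset.range n, if Us i ω = m then Xs i ω j else 0

/-- `μ̂_{ℓ,m}^{(n)}`. -/
def muZUhat {p M q : ℕ} (Xs : ℕ → Ω → Fin p → ℝ) (Us : ℕ → Ω → Fin M) (Zs : ℕ → Ω → Fin q)
    (l : Fin q) (m : Fin M) (n : ℕ) (ω : Ω) : Fin p → ℝ :=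
  fun j => (NZU Us Zs l m n ω)⁻¹ *
    ∑ i ∈ Finset.range n, if Zs i ω = l ∧ Us i ω = m then Xs i ω j else 0

/-- `V̂_m^{(n)}`. -/
def VUhat {p M : ℕ} (Xs : ℕ → Ω → Fin p → ℝ) (Us : ℕ → Ω → Fin M) (m : Fin M)
    (n : ℕ) (ω : Ω) : Matrix (Fin p) (Fin p) ℝ :=
  Matrix.of fun a b => (NU Us m n ω)⁻¹ * ∑ i ∈ Finset.range n,
    if Us i ω = m then
      (Xs i ω a - muUhat Xs Us m n ω a) * (Xs i ω b - muUhat Xs Us m n ω b) else 0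

/-- `ξ̂_{K|m}^{(n)}`. -/
def xiKmhat {p M q : ℕ} (Xs : ℕ → Ω → Fin p → ℝ) (Us : ℕ → Ω → Fin M) (Zs : ℕ → Ω → Fin q)
    (K : Finset (Fin p)) (m : Fin M) (n : ℕ) (ω : Ω) : ℝ :=
  ∑ l : Fin q, pcondhat Us Zs l m n ω ^ 2 *
    esq ((1 - VUhat Xs Us m n ω * QK K (VUhat Xs Us m n ω)) *ᵥ
      (muZUhat Xs Us Zs l m n ω - muUhat Xs Us m n ω))

/-- `ξ̂_K^{(n)}`. -/
def xiKhat {p M q : ℕ} (Xs : ℕ → Ω → Fin p → ℝ) (Us : ℕ → Ω → Fin M) (Zs : ℕ → Ω → Fin q)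
    (K : Finset (Fin p)) (n : ℕ) (ω : Ω) : ℝ :=
  ∑ m : Fin M, pUhat Us m n ω ^ 2 * xiKmhat Xs Us Zs K m n ω

/-- i.i.d. sample with the distribution of `(X, U, Z)`. -/
def IsIIDSample {p M q : ℕ} (P : Measure Ω) (X : Ω → Fin p → ℝ) (U : Ω → Fin M)
    (Z : Ω → Fin q) (Xs : ℕ → Ω → Fin p → ℝ) (Us : ℕ → Ω → Fin M) (Zs : ℕ → Ω → Fin q) :
    Prop :=
  (∀ i, Measurable fun ω => (Xs i ω, Us i ω, Zs i ω)) ∧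
  iIndepFun (fun i ω => (Xs i ω, Us i ω, Zs i ω)) P ∧
  ∀ i, IdentDistrib (fun ω => (Xs i ω, Us i ω, Zs i ω)) (fun ω => (X ω, U ω, Z ω)) P P


/-- i.i.d. sample with the distribution of `(X, U)`. -/
def IsIIDSample2 {p M : ℕ} (P : Measure Ω) (X : Ω → Fin p → ℝ) (U : Ω → Fin M)
    (Xs : ℕ → Ω → Fin p → ℝ) (Us : ℕ → Ω → Fin M) : Prop :=
  (∀ i, Measurable fun ω => (Xs i ω, Us i ω)) ∧
  iIndepFun (fun i ω => (Xs i ω, Us i ω)) P ∧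
  ∀ i, IdentDistrib (fun ω => (Xs i ω, Us i ω)) (fun ω => (X ω, U ω)) P P

/-- The euclidean space `𝓔 = M_{qp,M}(ℝ) × ℝ^{pM} × ℝ^M × M_{q,M}(ℝ) × L(ℝ^p)^M`. -/
abbrev ESp (p q M : ℕ) : Type :=
  (Fin q → Fin M → (Fin p → ℝ)) × (Fin M → (Fin p → ℝ)) × (Fin M → ℝ) ×
    (Fin q → Fin M → ℝ) × (Fin M → (Fin p → Fin p → ℝ))

/-- The random element `𝒲_i` of `𝓔`. -/
def Wsample {p M q : ℕ} (Xs : ℕ → Ω → Fin p → ℝ) (Us : ℕ → Ω → Fin M)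
    (Zs : ℕ → Ω → Fin q) (i : ℕ) (ω : Ω) : ESp p q M :=
  (fun l m j => if Zs i ω = l ∧ Us i ω = m then Xs i ω j else 0,
   fun m j => if Us i ω = m then Xs i ω j else 0,
   fun m => if Us i ω = m then 1 else 0,
   fun l m => if Zs i ω = l ∧ Us i ω = m then 1 else 0,
   fun m a b => if Us i ω = m then Xs i ω a * Xs i ω b else 0)

/-- `E(𝒲)`, computed componentwise. -/
def EW {p M q : ℕ} (P : Measure Ω) (X : Ω → Fin p → ℝ) (U : Ω → Fin M)
    (Z : Ω → Fin q) : ESp p q M :=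
  (fun l m j => ∫ ω, (if Z ω = l ∧ U ω = m then X ω j else 0) ∂P,
   fun m j => ∫ ω, (if U ω = m then X ω j else 0) ∂P,
   fun m => ∫ ω, (if U ω = m then (1 : ℝ) else 0) ∂P,
   fun l m => ∫ ω, (if Z ω = l ∧ U ω = m then (1 : ℝ) else 0) ∂P,
   fun m a b => ∫ ω, (if U ω = m then X ω a * X ω b else 0) ∂P)

/-- `Ŵ^{(n)} = √n (n⁻¹ Σ_{i<n} 𝒲_i - E(𝒲))`. -/
def What {p M q : ℕ} (P : Measure Ω) (X : Ω → Fin p → ℝ) (U : Ω → Fin M) (Z : Ω → Fin q)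
    (Xs : ℕ → Ω → Fin p → ℝ) (Us : ℕ → Ω → Fin M) (Zs : ℕ → Ω → Fin q)
    (n : ℕ) (ω : Ω) : ESp p q M :=
  Real.sqrt n • ((n : ℝ)⁻¹ • (∑ i ∈ Finset.range n, Wsample Xs Us Zs i ω) - EW P X U Z)

/-- `Δ_{ℓ,K|m} = (I - V_m Q_{K|m})(μ_{ℓ,m} - μ_m)`. -/
def Delta {p M q : ℕ} (P : Measure Ω) (X : Ω → Fin p → ℝ) (U : Ω → Fin M) (Z : Ω → Fin q)
    (K : Finset (Fin p)) (l : Fin q) (m : Fin M) : Fin p → ℝ :=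
  (1 - VU P X U m * QK K (VU P X U m)) *ᵥ (muZU P X U Z l m - muU P X U m)

/-- The operator `Φ_{ℓ,K|m}`. -/
def PhiF {p M q : ℕ} (P : Measure Ω) (X : Ω → Fin p → ℝ) (U : Ω → Fin M) (Z : Ω → Fin q)
    (K : Finset (Fin p)) (l : Fin q) (m : Fin M) (T : ESp p q M) : ℝ :=
  (pU P U m)⁻¹ * (T.2.2.2.1 l m - T.2.2.1 m * pcond P U Z l m) *
    Real.sqrt (esq (Delta P X U Z K l m))

/-- The operator `Ψ_{ℓ,K|m}`. -/
def PsiF {p M q : ℕ} (P : Measure Ω) (X : Ω → Fin p → ℝ) (U : Ω → Fin M) (Z : Ω → Fin q)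
    (K : Finset (Fin p)) (l : Fin q) (m : Fin M) (T : ESp p q M) : Fin p → ℝ :=
  (pU P U m)⁻¹ •
    ((1 - VU P X U m * QK K (VU P X U m)) *ᵥ
      ((pcond P U Z l m)⁻¹ • (T.1 l m - T.2.2.2.1 l m • muZU P X U Z l m) -
        T.2.1 m + T.2.2.1 m • muU P X U m -
        (Matrix.of (T.2.2.2.2 m) -
            T.2.2.1 m • (VU P X U m + tensor (muU P X U m) (muU P X U m))) *ᵥ
          (QK K (VU P X U m) *ᵥ (muZU P X U Z l m - muU P X U m)) +
        tensor (T.2.1 m - T.2.2.1 m • muU P X U m) (muU P X U m) *ᵥ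
          (QK K (VU P X U m) *ᵥ (muZU P X U Z l m - muU P X U m)) +
        tensor (muU P X U m) (T.2.1 m - T.2.2.1 m • muU P X U m) *ᵥ
          (QK K (VU P X U m) *ᵥ (muZU P X U Z l m - muU P X U m))))

/-- The operator `Λ_{K|m}`. -/
def LamF {p M q : ℕ} (P : Measure Ω) (X : Ω → Fin p → ℝ) (U : Ω → Fin M) (Z : Ω → Fin q)
    (K : Finset (Fin p)) (m : Fin M) (T : ESp p q M) : ℝ :=
  2 * pU P U m * T.2.2.1 m * xiKm P X U Z K m
section AlgebraAux

variable {p : ℕ}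

lemma tensor_mulVec (u v x : Fin p → ℝ) : tensor u v *ᵥ x = (u ⬝ᵥ x) • v := by
  funext i
  simp only [tensor, Matrix.mulVec, Matrix.of_apply, dotProduct, Pi.smul_apply, smul_eq_mul]
  rw [Finset.sum_mul]
  exact Finset.sum_congr rfl fun j _ => by ring

lemma AK_mul_AKT (K : Finset (Fin p)) (W : Matrix (Fin p) (Fin p) ℝ)
    (i j : {a // a ∈ K}) : (AK K * W * (AK K)ᵀ) i j = W ↑i ↑j := by
  simp [Matrix.mul_apply, AK, Matrix.transpose_apply, ite_mul, mul_ite, Finset.sum_ite_eq,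
    Finset.sum_ite_eq']

lemma AK_transpose_mulVec (K : Finset (Fin p)) (x : {a // a ∈ K} → ℝ) :
    (AK K)ᵀ *ᵥ x = fun i => if h : i ∈ K then x ⟨i, h⟩ else 0 := by
  funext i
  simp only [Matrix.mulVec, Matrix.transpose_apply, AK, Matrix.of_apply, dotProduct]
  by_cases h : i ∈ K
  · rw [dif_pos h]
    rw [Finset.sum_eq_single (⟨i, h⟩ : {a // a ∈ K})]
    · simp
    · intro b _ hb
      have : ¬((b : Fin p) = i) := fun hc => hb (Subtype.ext hc)
      simp [this]
    · simp
  · rw [dif_neg h]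
    apply Finset.sum_eq_zero
    intro b _
    have : ¬((b : Fin p) = i) := fun hc => h (hc ▸ b.2)
    simp [this]

lemma AK_posDef (K : Finset (Fin p)) {V : Matrix (Fin p) (Fin p) ℝ} (hV : V.PosDef) :
    (AK K * V * (AK K)ᵀ).PosDef := by
  have hsymm : ∀ a b, V a b = V b a := by
    intro a b
    have := congrFun (congrFun hV.1 a) b
    simpa [Matrix.conjTranspose_apply] using this.symm
  refine Matrix.PosDef.of_dotProduct_mulVec_pos ?_ ?_
  · show (AK K * V * (AK K)ᵀ)ᴴ = _
    ext i j
    simp only [Matrix.conjTranspose_apply, star_trivial, AK_mul_AKT]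
    exact hsymm _ _
  · intro x hx
    set y : Fin p → ℝ := fun i => if h : i ∈ K then x ⟨i, h⟩ else 0 with hy
    have hAx : (AK K)ᵀ *ᵥ x = y := AK_transpose_mulVec K x
    have hyne : y ≠ 0 := by
      obtain ⟨k, hk⟩ : ∃ k, x k ≠ 0 := by
        by_contra hc
        push_neg at hc
        exact hx (funext hc)
      intro hc
      have : y (k : Fin p) = 0 := by rw [hc]; rfl
      rw [hy] at this
      simp only [dif_pos k.2, Subtype.coe_eta] at this
      exact hk this
    have hpos := hV.dotProduct_mulVec_pos hyne
    have key : star x ⬝ᵥ (AK K * V * (AK K)ᵀ) *ᵥ x = star y ⬝ᵥ V *ᵥ y := by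
      rw [← Matrix.mulVec_mulVec, ← Matrix.mulVec_mulVec, hAx]
      rw [Matrix.dotProduct_mulVec]
      have hsx : star x = x := by funext i; simp
      have hsy : star y = y := by funext i; simp
      rw [hsx, hsy, ← Matrix.mulVec_transpose, hAx]
    rw [key]
    exact hpos

lemma QK_mul_QK (K : Finset (Fin p)) (W1 Wm W2 : Matrix (Fin p) (Fin p) ℝ) :
    QK K W1 * Wm * QK K W2 =
      (AK K)ᵀ * ((AK K * W1 * (AK K)ᵀ)⁻¹ * (AK K * Wm * (AK K)ᵀ) *
        (AK K * W2 * (AK K)ᵀ)⁻¹) * AK K := by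
  simp only [QK, Matrix.mul_assoc]

lemma QK_left (K : Finset (Fin p)) {W1 : Matrix (Fin p) (Fin p) ℝ}
    (W2 : Matrix (Fin p) (Fin p) ℝ) (h1 : IsUnit (AK K * W1 * (AK K)ᵀ).det) :
    QK K W1 * W1 * QK K W2 = QK K W2 := by
  rw [QK_mul_QK, Matrix.nonsing_inv_mul _ h1, Matrix.one_mul]
  simp only [QK, Matrix.mul_assoc]

lemma QK_right (K : Finset (Fin p)) (W1 : Matrix (Fin p) (Fin p) ℝ)
    {W2 : Matrix (Fin p) (Fin p) ℝ} (h2 : IsUnit (AK K * W2 * (AK K)ᵀ).det) :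
    QK K W1 * W2 * QK K W2 = QK K W1 := by
  rw [QK_mul_QK, Matrix.mul_assoc ((AK K * W1 * (AK K)ᵀ)⁻¹), Matrix.mul_nonsing_inv _ h2,
    Matrix.mul_one]
  simp only [QK, Matrix.mul_assoc]

lemma G_transfer (K : Finset (Fin p)) {W1 W2 : Matrix (Fin p) (Fin p) ℝ}
    (h1 : IsUnit (AK K * W1 * (AK K)ᵀ).det) (h2 : IsUnit (AK K * W2 * (AK K)ᵀ).det) :
    (1 - W1 * QK K W1) * (1 + (W1 - W2) * QK K W2) = 1 - W2 * QK K W2 := by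
  have a1 : W1 * QK K W1 * (W1 * QK K W2) = W1 * QK K W2 := by
    rw [show W1 * QK K W1 * (W1 * QK K W2) = W1 * (QK K W1 * W1 * QK K W2) from by
      simp only [Matrix.mul_assoc], QK_left K W2 h1]
  have a2 : W1 * QK K W1 * (W2 * QK K W2) = W1 * QK K W1 := by
    rw [show W1 * QK K W1 * (W2 * QK K W2) = W1 * (QK K W1 * W2 * QK K W2) from by
      simp only [Matrix.mul_assoc], QK_right K W1 h2]
  simp only [Matrix.mul_add, Matrix.add_mul, Matrix.sub_mul, Matrix.mul_sub, Matrix.one_mul,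
    Matrix.mul_one, a1, a2]
  abel

end AlgebraAux
section TopAux

variable {p : ℕ} {α : Type*} {l : Filter α}

lemma tendsto_mulVec {Mf : α → Matrix (Fin p) (Fin p) ℝ} {vf : α → Fin p → ℝ}
    {M : Matrix (Fin p) (Fin p) ℝ} {v : Fin p → ℝ}
    (hM : Tendsto Mf l (nhds M)) (hv : Tendsto vf l (nhds v)) :
    Tendsto (fun x => Mf x *ᵥ vf x) l (nhds (M *ᵥ v)) := by
  rw [tendsto_pi_nhds]
  intro i
  have hMe : ∀ j, Tendsto (fun x => Mf x i j) l (nhds (M i j)) := by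
    intro j
    have := tendsto_pi_nhds.1 hM i
    exact tendsto_pi_nhds.1 this j
  have hve : ∀ j, Tendsto (fun x => vf x j) l (nhds (v j)) := tendsto_pi_nhds.1 hv
  simp only [Matrix.mulVec, dotProduct]
  exact tendsto_finset_sum _ fun j _ => (hMe j).mul (hve j)

lemma tendsto_matMul {n1 n2 n3 : Type*} [Fintype n2]
    {Mf : α → Matrix n1 n2 ℝ} {Nf : α → Matrix n2 n3 ℝ}
    {M : Matrix n1 n2 ℝ} {N : Matrix n2 n3 ℝ}
    (hM : Tendsto Mf l (nhds M)) (hN : Tendsto Nf l (nhds N)) :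
    Tendsto (fun x => Mf x * Nf x) l (nhds (M * N)) := by
  refine tendsto_pi_nhds.2 fun i => ?_
  refine tendsto_pi_nhds.2 fun j => ?_
  simp only [Matrix.mul_apply]
  exact tendsto_finset_sum _ fun k _ =>
    ((tendsto_pi_nhds.1 (tendsto_pi_nhds.1 hM i) k).mul
      (tendsto_pi_nhds.1 (tendsto_pi_nhds.1 hN k) j))

lemma tendsto_QK (K : Finset (Fin p)) {Vf : α → Matrix (Fin p) (Fin p) ℝ}
    {V : Matrix (Fin p) (Fin p) ℝ} (hV : Tendsto Vf l (nhds V))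
    (hdet : IsUnit (AK K * V * (AK K)ᵀ).det) :
    Tendsto (fun x => QK K (Vf x)) l (nhds (QK K V)) := by
  have hB : Tendsto (fun x => AK K * Vf x * (AK K)ᵀ) l (nhds (AK K * V * (AK K)ᵀ)) :=
    tendsto_matMul (tendsto_matMul tendsto_const_nhds hV) tendsto_const_nhds
  have hinv : Tendsto (fun x => (AK K * Vf x * (AK K)ᵀ)⁻¹) l (nhds ((AK K * V * (AK K)ᵀ)⁻¹)) := by
    have hc : ContinuousAt Inv.inv (AK K * V * (AK K)ᵀ) := by
      apply continuousAt_matrix_inv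
      have hne : (AK K * V * (AK K)ᵀ).det ≠ 0 := by
        intro h0
        rw [h0] at hdet
        exact hdet.ne_zero rfl
      have : ContinuousAt Ring.inverse ((AK K * V * (AK K)ᵀ).det) := by
        rw [show (Ring.inverse : ℝ → ℝ) = fun x => x⁻¹ from funext fun x => Ring.inverse_eq_inv x]
        exact (continuousAt_inv₀ hne)
      exact this
    exact hc.tendsto.comp hB
  exact tendsto_matMul (tendsto_matMul tendsto_const_nhds hinv) tendsto_const_nhds

lemma tendsto_clm_comp {E F G : Type*} [NormedAddCommGroup E] [NormedSpace ℝ E]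
    [NormedAddCommGroup F] [NormedSpace ℝ F] [NormedAddCommGroup G] [NormedSpace ℝ G]
    {f : α → F →L[ℝ] G} {g : α → E →L[ℝ] F} {f0 : F →L[ℝ] G} {g0 : E →L[ℝ] F}
    (hf : Tendsto f l (nhds f0)) (hg : Tendsto g l (nhds g0)) :
    Tendsto (fun x => (f x).comp (g x)) l (nhds (f0.comp g0)) := by
  have := (isBoundedBilinearMap_comp (𝕜 := ℝ) (E := E) (F := F) (G := G)).continuous
  exact (this.tendsto (f0, g0)).comp (hf.prodMk_nhds hg)

/-- `mulVec` as a continuous linear map, and its linearity/continuity in the matrix. -/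
def mvCLM (M : Matrix (Fin p) (Fin p) ℝ) : (Fin p → ℝ) →L[ℝ] (Fin p → ℝ) :=
  LinearMap.toContinuousLinearMap (Matrix.mulVecLin M)

lemma mvCLM_apply (M : Matrix (Fin p) (Fin p) ℝ) (v : Fin p → ℝ) : mvCLM M v = M *ᵥ v := rfl

def mvL : Matrix (Fin p) (Fin p) ℝ →ₗ[ℝ] ((Fin p → ℝ) →L[ℝ] (Fin p → ℝ)) where
  toFun := mvCLM
  map_add' A B := by
    ext v i
    simp [mvCLM_apply, Matrix.add_mulVec]
  map_smul' c A := by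
    ext v i
    simp [mvCLM_apply, Matrix.smul_mulVec]

lemma tendsto_mvCLM {Mf : α → Matrix (Fin p) (Fin p) ℝ} {M : Matrix (Fin p) (Fin p) ℝ}
    (hM : Tendsto Mf l (nhds M)) :
    Tendsto (fun x => mvCLM (Mf x)) l (nhds (mvCLM M)) := by
  have : Continuous (mvL (p := p)) := mvL.continuous_of_finiteDimensional
  exact (this.tendsto M).comp hM

end TopAux
section MeasAux

variable {p M q : ℕ} {P : Measure Ω} {X : Ω → Fin p → ℝ} {U : Ω → Fin M} {Z : Ω → Fin q}

lemma slln_comp {Xs : ℕ → Ω → Fin p → ℝ} {Us : ℕ → Ω → Fin M} {Zs : ℕ → Ω → Fin q}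
    (hiid : IsIIDSample P X U Z Xs Us Zs)
    (g : ((Fin p → ℝ) × Fin M × Fin q) → ℝ) (hg : Measurable g)
    (hint : Integrable (fun ω => g (X ω, U ω, Z ω)) P) :
    ∀ᵐ ω ∂P, Tendsto (fun n : ℕ => (∑ i ∈ Finset.range n, g (Xs i ω, Us i ω, Zs i ω)) / n)
      atTop (nhds (∫ ω, g (X ω, U ω, Z ω) ∂P)) := by
  obtain ⟨hmeas, hindep, hident⟩ := hiid
  set Y : ℕ → Ω → ℝ := fun i ω => g (Xs i ω, Us i ω, Zs i ω) with hY
  have hid : ∀ i, IdentDistrib (Y i) (fun ω => g (X ω, U ω, Z ω)) P P := fun i =>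
    (hident i).comp hg
  have hident' : ∀ i, IdentDistrib (Y i) (Y 0) P P := fun i => (hid i).trans (hid 0).symm
  have hint0 : Integrable (Y 0) P := (hid 0).integrable_iff.2 hint
  have hpair : Pairwise (Function.onFun (IndepFun · · P) Y) := fun i j hij =>
    (hindep.indepFun hij).comp hg hg
  have h := strong_law_ae_real Y hint0 hpair hident'
  have heq : (∫ ω, Y 0 ω ∂P) = ∫ ω, g (X ω, U ω, Z ω) ∂P := (hid 0).integral_eq
  filter_upwards [h] with ω hω
  rw [heq] at hω
  exact hω

lemma measurable_Xi (hX : Measurable X) (i : Fin p) : Measurable fun ω => X ω i :=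
  (measurable_pi_apply i).comp hX

lemma integrable_sumsq [IsProbabilityMeasure P] (hX : Measurable X)
    (hmom : Integrable (fun ω => (∑ i, X ω i ^ 2) ^ 2) P) :
    Integrable (fun ω => ∑ i, X ω i ^ 2) P := by
  apply Integrable.mono' ((integrable_const (1 : ℝ)).add hmom)
  · exact (Finset.measurable_sum Finset.univ fun i _ =>
      ((measurable_Xi hX i).pow_const 2)).aestronglyMeasurable
  · filter_upwards with ω
    have hnn : (0 : ℝ) ≤ ∑ i, X ω i ^ 2 := Finset.sum_nonneg fun i _ => sq_nonneg _
    rw [Real.norm_eq_abs, abs_of_nonneg hnn]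
    simp only [Pi.add_apply]
    nlinarith [sq_nonneg ((∑ i, X ω i ^ 2) - 1)]

lemma integrable_Xj [IsProbabilityMeasure P] (hX : Measurable X)
    (hmom : Integrable (fun ω => (∑ i, X ω i ^ 2) ^ 2) P) (j : Fin p) :
    Integrable (fun ω => X ω j) P := by
  apply Integrable.mono' ((integrable_const (1 : ℝ)).add (integrable_sumsq hX hmom))
  · exact (measurable_Xi hX j).aestronglyMeasurable
  · filter_upwards with ω
    simp only [Pi.add_apply, Real.norm_eq_abs]
    have h1 : X ω j ^ 2 ≤ ∑ i, X ω i ^ 2 :=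
      Finset.single_le_sum (fun i _ => sq_nonneg (X ω i)) (Finset.mem_univ j)
    cases abs_cases (X ω j) with
    | inl h => nlinarith [h.1]
    | inr h => nlinarith [h.1]

lemma integrable_XjXk [IsProbabilityMeasure P] (hX : Measurable X)
    (hmom : Integrable (fun ω => (∑ i, X ω i ^ 2) ^ 2) P) (j k : Fin p) :
    Integrable (fun ω => X ω j * X ω k) P := by
  apply Integrable.mono' (integrable_sumsq hX hmom)
  · exact ((measurable_Xi hX j).mul (measurable_Xi hX k)).aestronglyMeasurable
  · filter_upwards with ω
    rw [Real.norm_eq_abs, abs_mul]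
    have h1 : X ω j ^ 2 ≤ ∑ i, X ω i ^ 2 :=
      Finset.single_le_sum (fun i _ => sq_nonneg (X ω i)) (Finset.mem_univ j)
    have h2 : X ω k ^ 2 ≤ ∑ i, X ω i ^ 2 :=
      Finset.single_le_sum (fun i _ => sq_nonneg (X ω i)) (Finset.mem_univ k)
    nlinarith [abs_nonneg (X ω j), abs_nonneg (X ω k), sq_abs (X ω j), sq_abs (X ω k),
      sq_nonneg (|X ω j| - |X ω k|)]

lemma msU (hU : Measurable U) (m : Fin M) : MeasurableSet {ω | U ω = m} :=
  hU (measurableSet_singleton m)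

lemma msZU (hZ : Measurable Z) (hU : Measurable U) (l : Fin q) (m : Fin M) :
    MeasurableSet {ω | Z ω = l ∧ U ω = m} := by
  have : {ω | Z ω = l ∧ U ω = m} = (Z ⁻¹' {l}) ∩ (U ⁻¹' {m}) := rfl
  rw [this]
  exact (hZ (measurableSet_singleton l)).inter (hU (measurableSet_singleton m))

lemma integrable_indU (hU : Measurable U) {f : Ω → ℝ} (hf : Integrable f P)
    (hfm : Measurable f) (m : Fin M) :
    Integrable (fun ω => if U ω = m then f ω else 0) P := by
  apply Integrable.mono' hf.abs
  · exact (Measurable.ite (msU hU m) hfm measurable_const).aestronglyMeasurable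
  · filter_upwards with ω
    by_cases h : U ω = m <;> simp [h, le_abs_self, abs_nonneg]

lemma integrable_indZU (hZ : Measurable Z) (hU : Measurable U) {f : Ω → ℝ}
    (hf : Integrable f P) (hfm : Measurable f) (l : Fin q) (m : Fin M) :
    Integrable (fun ω => if Z ω = l ∧ U ω = m then f ω else 0) P := by
  apply Integrable.mono' hf.abs
  · exact (Measurable.ite (msZU hZ hU l m) hfm measurable_const).aestronglyMeasurable
  · filter_upwards with ω
    by_cases h : Z ω = l ∧ U ω = m <;> simp [h, le_abs_self, abs_nonneg]

lemma integral_indU_one [IsProbabilityMeasure P] (hU : Measurable U) (m : Fin M) :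
    ∫ ω, (if U ω = m then (1 : ℝ) else 0) ∂P = pU P U m := by
  have heq : (fun ω => if U ω = m then (1 : ℝ) else 0) =
      ({ω | U ω = m} : Set Ω).indicator (fun _ => 1) := by
    funext ω; by_cases h : U ω = m <;> simp [Set.indicator, h]
  rw [heq, MeasureTheory.integral_indicator_const (1 : ℝ) (msU hU m), smul_eq_mul, mul_one]
  rfl

lemma integral_indZU_one [IsProbabilityMeasure P] (hZ : Measurable Z) (hU : Measurable U)
    (l : Fin q) (m : Fin M) :
    ∫ ω, (if Z ω = l ∧ U ω = m then (1 : ℝ) else 0) ∂P = pZU P U Z l m := by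
  have heq : (fun ω => if Z ω = l ∧ U ω = m then (1 : ℝ) else 0) =
      ({ω | Z ω = l ∧ U ω = m} : Set Ω).indicator (fun _ => 1) := by
    funext ω; by_cases h : Z ω = l ∧ U ω = m <;> simp [Set.indicator, h]
  rw [heq, MeasureTheory.integral_indicator_const (1 : ℝ) (msZU hZ hU l m), smul_eq_mul, mul_one]
  rfl

lemma integral_indU_X {m : Fin M} (hp : pU P U m ≠ 0) (j : Fin p) :
    ∫ ω, (if U ω = m then X ω j else 0) ∂P = pU P U m * muU P X U m j := by
  rw [muU, ← mul_assoc, mul_inv_cancel₀ hp, one_mul]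

lemma integral_indZU_X {l : Fin q} {m : Fin M} (hp : pZU P U Z l m ≠ 0) (j : Fin p) :
    ∫ ω, (if Z ω = l ∧ U ω = m then X ω j else 0) ∂P =
      pZU P U Z l m * muZU P X U Z l m j := by
  rw [muZU, ← mul_assoc, mul_inv_cancel₀ hp, one_mul]

lemma integral_indU_XX [IsProbabilityMeasure P] (hX : Measurable X) (hU : Measurable U)
    (hmom : Integrable (fun ω => (∑ i, X ω i ^ 2) ^ 2) P)
    {m : Fin M} (hp : pU P U m ≠ 0) (a b : Fin p) :
    ∫ ω, (if U ω = m then X ω a * X ω b else 0) ∂P =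
      pU P U m * (VU P X U m a b + muU P X U m a * muU P X U m b) := by
  set μ := muU P X U m with hμ
  have key : ∀ ω, (if U ω = m then (X ω a - μ a) * (X ω b - μ b) else 0) =
      (if U ω = m then X ω a * X ω b else 0) - μ a * (if U ω = m then X ω b else 0)
      - μ b * (if U ω = m then X ω a else 0)
      + (μ a * μ b) * (if U ω = m then (1:ℝ) else 0) := by
    intro ω; by_cases h : U ω = m <;> simp [h] <;> ring
  have iab : Integrable (fun ω => if U ω = m then X ω a * X ω b else 0) P :=
    integrable_indU hU (integrable_XjXk hX hmom a b)
      ((measurable_Xi hX a).mul (measurable_Xi hX b)) m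
  have ia : Integrable (fun ω => if U ω = m then X ω a else 0) P :=
    integrable_indU hU (integrable_Xj hX hmom a) (measurable_Xi hX a) m
  have ib : Integrable (fun ω => if U ω = m then X ω b else 0) P :=
    integrable_indU hU (integrable_Xj hX hmom b) (measurable_Xi hX b) m
  have ione : Integrable (fun ω => if U ω = m then (1:ℝ) else 0) P :=
    integrable_indU hU (integrable_const 1) measurable_const m
  have hVab : VU P X U m a b = (pU P U m)⁻¹ *
      ∫ ω, (if U ω = m then (X ω a - μ a) * (X ω b - μ b) else 0) ∂P := rfl
  have hexp : ∫ ω, (if U ω = m then (X ω a - μ a) * (X ω b - μ b) else 0) ∂P =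
      (∫ ω, (if U ω = m then X ω a * X ω b else 0) ∂P)
      - μ a * (∫ ω, (if U ω = m then X ω b else 0) ∂P)
      - μ b * (∫ ω, (if U ω = m then X ω a else 0) ∂P)
      + (μ a * μ b) * (∫ ω, (if U ω = m then (1:ℝ) else 0) ∂P) := by
    simp only [key]
    have I2 : Integrable (fun ω => ((if U ω = m then X ω a * X ω b else 0)
        - μ a * if U ω = m then X ω b else 0)) P := iab.sub (ib.const_mul _)
    have I1 : Integrable (fun ω => (((if U ω = m then X ω a * X ω b else 0)
        - μ a * if U ω = m then X ω b else 0) - μ b * if U ω = m then X ω a else 0)) P :=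
      I2.sub (ia.const_mul _)
    have I0 : Integrable (fun ω => μ a * μ b * if U ω = m then (1:ℝ) else 0) P :=
      ione.const_mul _
    rw [MeasureTheory.integral_add I1 I0, MeasureTheory.integral_sub I2 (ia.const_mul _),
      MeasureTheory.integral_sub iab (ib.const_mul _), MeasureTheory.integral_const_mul,
      MeasureTheory.integral_const_mul, MeasureTheory.integral_const_mul]
  rw [hVab, hexp, integral_indU_X hp, integral_indU_X hp, integral_indU_one hU, ← hμ]
  field_simp
  ring

end MeasAux
section EmpAux

variable {p M q : ℕ}

lemma tendsto_ratio {fn gn : ℕ → ℝ} {A B : ℝ}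
    (hf : Tendsto (fun n => fn n / n) atTop (nhds A))
    (hg : Tendsto (fun n => gn n / n) atTop (nhds B)) (hB : B ≠ 0) :
    Tendsto (fun n => fn n / gn n) atTop (nhds (A / B)) := by
  apply (hf.div hg hB).congr'
  filter_upwards [eventually_gt_atTop 0] with n hn
  have hn' : (n : ℝ) ≠ 0 := Nat.cast_ne_zero.2 hn.ne'
  simp only [Pi.div_apply]
  by_cases hg0 : gn n = 0
  · simp [hg0]
  · field_simp

lemma NU_zero {Us : ℕ → Ω → Fin M} {m : Fin M} {n : ℕ} {ω : Ω}
    (h : NU Us m n ω = 0) : ∀ i ∈ Finset.range n, Us i ω ≠ m := by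
  intro i hi hc
  have := (Finset.sum_eq_zero_iff_of_nonneg (fun j _ => by positivity)).1 h i hi
  rw [if_pos hc] at this
  norm_num at this

lemma sum_indU_X_eq {Xs : ℕ → Ω → Fin p → ℝ} {Us : ℕ → Ω → Fin M} {m : Fin M} {n : ℕ}
    {ω : Ω} (j : Fin p) :
    (∑ i ∈ Finset.range n, if Us i ω = m then Xs i ω j else 0) =
      NU Us m n ω * muUhat Xs Us m n ω j := by
  by_cases h : NU Us m n ω = 0
  · rw [h, zero_mul]
    apply Finset.sum_eq_zero
    intro i hi
    rw [if_neg (NU_zero h i hi)]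
  · rw [muUhat, ← mul_assoc, mul_inv_cancel₀ h, one_mul]

lemma NZU_zero {Us : ℕ → Ω → Fin M} {Zs : ℕ → Ω → Fin q} {l : Fin q} {m : Fin M} {n : ℕ}
    {ω : Ω} (h : NZU Us Zs l m n ω = 0) :
    ∀ i ∈ Finset.range n, ¬(Zs i ω = l ∧ Us i ω = m) := by
  intro i hi hc
  have := (Finset.sum_eq_zero_iff_of_nonneg (fun j _ => by positivity)).1 h i hi
  rw [if_pos hc] at this
  norm_num at this

lemma sum_indZU_X_eq {Xs : ℕ → Ω → Fin p → ℝ} {Us : ℕ → Ω → Fin M} {Zs : ℕ → Ω → Fin q}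
    {l : Fin q} {m : Fin M} {n : ℕ} {ω : Ω} (j : Fin p) :
    (∑ i ∈ Finset.range n, if Zs i ω = l ∧ Us i ω = m then Xs i ω j else 0) =
      NZU Us Zs l m n ω * muZUhat Xs Us Zs l m n ω j := by
  by_cases h : NZU Us Zs l m n ω = 0
  · rw [h, zero_mul]
    apply Finset.sum_eq_zero
    intro i hi
    rw [if_neg (NZU_zero h i hi)]
  · rw [muZUhat, ← mul_assoc, mul_inv_cancel₀ h, one_mul]

lemma sum_indU_XX_eq {Xs : ℕ → Ω → Fin p → ℝ} {Us : ℕ → Ω → Fin M} {m : Fin M} {n : ℕ}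
    {ω : Ω} (a b : Fin p) :
    (∑ i ∈ Finset.range n, if Us i ω = m then Xs i ω a * Xs i ω b else 0) =
      NU Us m n ω * (VUhat Xs Us m n ω a b +
        muUhat Xs Us m n ω a * muUhat Xs Us m n ω b) := by
  set μ := muUhat Xs Us m n ω with hμ
  have key : ∀ i, (if Us i ω = m then (Xs i ω a - μ a) * (Xs i ω b - μ b) else 0) =
      (if Us i ω = m then Xs i ω a * Xs i ω b else 0)
      - μ a * (if Us i ω = m then Xs i ω b else 0)
      - μ b * (if Us i ω = m then Xs i ω a else 0)
      + (μ a * μ b) * (if Us i ω = m then (1:ℝ) else 0) := by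
    intro i; by_cases h : Us i ω = m <;> simp [h] <;> ring
  by_cases h : NU Us m n ω = 0
  · rw [h, zero_mul]
    apply Finset.sum_eq_zero
    intro i hi
    rw [if_neg (NU_zero h i hi)]
  · have hexp : (∑ i ∈ Finset.range n,
        if Us i ω = m then (Xs i ω a - μ a) * (Xs i ω b - μ b) else 0) =
        (∑ i ∈ Finset.range n, if Us i ω = m then Xs i ω a * Xs i ω b else 0)
        - μ a * (NU Us m n ω * μ b) - μ b * (NU Us m n ω * μ a)
        + (μ a * μ b) * NU Us m n ω := by
      simp only [key, Finset.sum_add_distrib, Finset.sum_sub_distrib, ← Finset.mul_sum]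
      rw [sum_indU_X_eq a, sum_indU_X_eq b, ← hμ]
      rfl
    have hV : VUhat Xs Us m n ω a b = (NU Us m n ω)⁻¹ * (∑ i ∈ Finset.range n,
        if Us i ω = m then (Xs i ω a - μ a) * (Xs i ω b - μ b) else 0) := rfl
    rw [hV, hexp]
    field_simp
    ring

end EmpAux

section WhatAux

variable {p M q : ℕ} {P : Measure Ω} {X : Ω → Fin p → ℝ} {U : Ω → Fin M} {Z : Ω → Fin q}
  {Xs : ℕ → Ω → Fin p → ℝ} {Us : ℕ → Ω → Fin M} {Zs : ℕ → Ω → Fin q} {n : ℕ} {ω : Ω}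

lemma What_c1 (l : Fin q) (m : Fin M) (j : Fin p) :
    (What P X U Z Xs Us Zs n ω).1 l m j = Real.sqrt n *
      ((∑ i ∈ Finset.range n, if Zs i ω = l ∧ Us i ω = m then Xs i ω j else 0) / n
        - ∫ ω', (if Z ω' = l ∧ U ω' = m then X ω' j else 0) ∂P) := by
  simp only [What, EW, Wsample, Prod.smul_fst, Prod.fst_sub, Prod.smul_snd, Prod.snd_sub,
    Prod.fst_sum, Finset.sum_apply, Pi.smul_apply, Pi.sub_apply, smul_eq_mul]
  rw [div_eq_inv_mul]

lemma What_c2 (m : Fin M) (j : Fin p) :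
    (What P X U Z Xs Us Zs n ω).2.1 m j = Real.sqrt n *
      ((∑ i ∈ Finset.range n, if Us i ω = m then Xs i ω j else 0) / n
        - ∫ ω', (if U ω' = m then X ω' j else 0) ∂P) := by
  simp only [What, EW, Wsample, Prod.smul_fst, Prod.fst_sub, Prod.smul_snd, Prod.snd_sub,
    Prod.fst_sum, Prod.snd_sum, Finset.sum_apply, Pi.smul_apply, Pi.sub_apply, smul_eq_mul]
  rw [div_eq_inv_mul]

lemma What_c3 (m : Fin M) :
    (What P X U Z Xs Us Zs n ω).2.2.1 m = Real.sqrt n *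
      (NU Us m n ω / n - ∫ ω', (if U ω' = m then (1:ℝ) else 0) ∂P) := by
  simp only [What, EW, Wsample, NU, Prod.smul_fst, Prod.fst_sub, Prod.smul_snd, Prod.snd_sub,
    Prod.fst_sum, Prod.snd_sum, Finset.sum_apply, Pi.smul_apply, Pi.sub_apply, smul_eq_mul]
  rw [div_eq_inv_mul]

lemma What_c4 (l : Fin q) (m : Fin M) :
    (What P X U Z Xs Us Zs n ω).2.2.2.1 l m = Real.sqrt n *
      (NZU Us Zs l m n ω / n - ∫ ω', (if Z ω' = l ∧ U ω' = m then (1:ℝ) else 0) ∂P) := by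
  simp only [What, EW, Wsample, NZU, Prod.smul_fst, Prod.fst_sub, Prod.smul_snd, Prod.snd_sub,
    Prod.fst_sum, Prod.snd_sum, Finset.sum_apply, Pi.smul_apply, Pi.sub_apply, smul_eq_mul]
  rw [div_eq_inv_mul]

lemma What_c5 (m : Fin M) (a b : Fin p) :
    (What P X U Z Xs Us Zs n ω).2.2.2.2 m a b = Real.sqrt n *
      ((∑ i ∈ Finset.range n, if Us i ω = m then Xs i ω a * Xs i ω b else 0) / n
        - ∫ ω', (if U ω' = m then X ω' a * X ω' b else 0) ∂P) := by
  simp only [What, EW, Wsample, Prod.smul_fst, Prod.fst_sub, Prod.smul_snd, Prod.snd_sub,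
    Prod.fst_sum, Prod.snd_sum, Finset.sum_apply, Pi.smul_apply, Pi.sub_apply, smul_eq_mul]
  rw [div_eq_inv_mul]

end WhatAux
section CLMAux
set_option synthInstance.maxHeartbeats 1000000
set_option maxHeartbeats 1000000

variable {p q M : ℕ}

def pi1CLM (l : Fin q) (m : Fin M) : ESp p q M →L[ℝ] (Fin p → ℝ) :=
  LinearMap.toContinuousLinearMap
    { toFun := fun T => T.1 l m, map_add' := fun _ _ => rfl, map_smul' := fun _ _ => rfl }

def pi2CLM (m : Fin M) : ESp p q M →L[ℝ] (Fin p → ℝ) :=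
  LinearMap.toContinuousLinearMap
    { toFun := fun T => T.2.1 m, map_add' := fun _ _ => rfl, map_smul' := fun _ _ => rfl }

def pi3CLM (m : Fin M) : ESp p q M →L[ℝ] ℝ :=
  LinearMap.toContinuousLinearMap
    { toFun := fun T => T.2.2.1 m, map_add' := fun _ _ => rfl, map_smul' := fun _ _ => rfl }

def pi4CLM (l : Fin q) (m : Fin M) : ESp p q M →L[ℝ] ℝ :=
  LinearMap.toContinuousLinearMap
    { toFun := fun T => T.2.2.2.1 l m, map_add' := fun _ _ => rfl, map_smul' := fun _ _ => rfl }

def pi5CLM (m : Fin M) : ESp p q M →L[ℝ] (Fin p → Fin p → ℝ) :=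
  LinearMap.toContinuousLinearMap
    { toFun := fun T => T.2.2.2.2 m, map_add' := fun _ _ => rfl, map_smul' := fun _ _ => rfl }

@[simp] lemma pi1CLM_apply (l : Fin q) (m : Fin M) (T : ESp p q M) :
    pi1CLM l m T = T.1 l m := rfl
@[simp] lemma pi2CLM_apply (m : Fin M) (T : ESp p q M) : pi2CLM (q := q) m T = T.2.1 m := rfl
@[simp] lemma pi3CLM_apply (m : Fin M) (T : ESp p q M) :
    pi3CLM (p := p) (q := q) m T = T.2.2.1 m := rfl
@[simp] lemma pi4CLM_apply (l : Fin q) (m : Fin M) (T : ESp p q M) :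
    pi4CLM (p := p) l m T = T.2.2.2.1 l m := rfl
@[simp] lemma pi5CLM_apply (m : Fin M) (T : ESp p q M) :
    pi5CLM (q := q) m T = T.2.2.2.2 m := rfl

def dotCLM (u : Fin p → ℝ) : (Fin p → ℝ) →L[ℝ] ℝ :=
  LinearMap.toContinuousLinearMap
    { toFun := fun v => v ⬝ᵥ u,
      map_add' := fun a b => add_dotProduct a b u,
      map_smul' := fun c a => smul_dotProduct c a u }

@[simp] lemma dotCLM_apply (u v : Fin p → ℝ) : dotCLM u v = v ⬝ᵥ u := rfl

def mvRCLM (u : Fin p → ℝ) : (Fin p → Fin p → ℝ) →L[ℝ] (Fin p → ℝ) :=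
  LinearMap.toContinuousLinearMap
    { toFun := fun N => Matrix.of N *ᵥ u,
      map_add' := fun a b => Matrix.add_mulVec (Matrix.of a) (Matrix.of b) u,
      map_smul' := fun c a => by
        simp only [RingHom.id_apply]
        exact Matrix.smul_mulVec c (Matrix.of a) u }

@[simp] lemma mvRCLM_apply (u : Fin p → ℝ) (N : Fin p → Fin p → ℝ) :
    mvRCLM u N = Matrix.of N *ᵥ u := rfl

/-- `Φ̂ = α • π₄ + β • π₃`. -/
def phiCLM (α β : ℝ) (l : Fin q) (m : Fin M) : ESp p q M →L[ℝ] ℝ :=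
  α • pi4CLM l m + β • pi3CLM m

lemma phiCLM_apply (α β : ℝ) (l : Fin q) (m : Fin M) (T : ESp p q M) :
    phiCLM α β l m T = α * T.2.2.2.1 l m + β * T.2.2.1 m := rfl

def clmA (l : Fin q) (m : Fin M) (μlm : Fin p → ℝ) : ESp p q M →L[ℝ] (Fin p → ℝ) :=
  pi1CLM l m - (pi4CLM l m).smulRight μlm

def clmC (m : Fin M) (μ : Fin p → ℝ) : ESp p q M →L[ℝ] (Fin p → ℝ) :=
  pi2CLM m - (pi3CLM m).smulRight μ

def clmB (m : Fin M) (μ : Fin p → ℝ) (VM : Matrix (Fin p) (Fin p) ℝ) (u₀ : Fin p → ℝ) :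
    ESp p q M →L[ℝ] (Fin p → ℝ) :=
  -(pi2CLM m) + (pi3CLM m).smulRight μ
    - (mvRCLM u₀).comp (pi5CLM m - (pi3CLM m).smulRight VM)
    + ((dotCLM u₀).comp (clmC m μ)).smulRight μ

lemma clmA_apply (l : Fin q) (m : Fin M) (μlm : Fin p → ℝ) (T : ESp p q M) :
    clmA l m μlm T = T.1 l m - T.2.2.2.1 l m • μlm := rfl

lemma clmC_apply (m : Fin M) (μ : Fin p → ℝ) (T : ESp p q M) :
    clmC (q := q) m μ T = T.2.1 m - T.2.2.1 m • μ := rfl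

lemma clmB_apply (m : Fin M) (μ : Fin p → ℝ) (VM : Matrix (Fin p) (Fin p) ℝ) (u₀ : Fin p → ℝ)
    (T : ESp p q M) :
    clmB (q := q) m μ VM u₀ T = -(T.2.1 m) + T.2.2.1 m • μ
      - (Matrix.of (T.2.2.2.2 m) - T.2.2.1 m • Matrix.of VM) *ᵥ u₀
      + ((T.2.1 m - T.2.2.1 m • μ) ⬝ᵥ u₀) • μ := by
  simp only [clmB, ContinuousLinearMap.add_apply, ContinuousLinearMap.sub_apply,
    ContinuousLinearMap.neg_apply, ContinuousLinearMap.smulRight_apply, pi2CLM_apply,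
    pi3CLM_apply, pi5CLM_apply, mvRCLM_apply, ContinuousLinearMap.comp_apply, dotCLM_apply,
    clmC_apply]
  rfl

lemma clmB_apply' (m : Fin M) (μ : Fin p → ℝ) (VM : Matrix (Fin p) (Fin p) ℝ) (u₀ : Fin p → ℝ)
    (T : ESp p q M) :
    clmB (q := q) m μ VM u₀ T = -(clmC m μ T)
      - (Matrix.of (T.2.2.2.2 m) - T.2.2.1 m • Matrix.of VM) *ᵥ u₀
      + ((clmC m μ T) ⬝ᵥ u₀) • μ := by
  rw [clmB_apply, clmC_apply]
  module

def eqCLM : (Fin p → ℝ) →L[ℝ] EuclideanSpace ℝ (Fin p) :=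
  ((EuclideanSpace.equiv (Fin p) ℝ).symm : (Fin p → ℝ) →L[ℝ] EuclideanSpace ℝ (Fin p))

@[simp] lemma eqCLM_apply (v : Fin p → ℝ) :
    eqCLM v = (EuclideanSpace.equiv (Fin p) ℝ).symm v := rfl

/-- The template for `Ψ̂` and `Ψ`. -/
def psiCLM (cinv s t : ℝ) (G : Matrix (Fin p) (Fin p) ℝ) (l : Fin q) (m : Fin M)
    (μlm μ : Fin p → ℝ) (VM : Matrix (Fin p) (Fin p) ℝ) (u₀ : Fin p → ℝ) :
    ESp p q M →L[ℝ] EuclideanSpace ℝ (Fin p) :=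
  cinv • (eqCLM.comp ((mvCLM G).comp (s • clmA l m μlm + clmB m μ VM u₀ + t • clmC m μ)))

lemma psiCLM_apply (cinv s t : ℝ) (G : Matrix (Fin p) (Fin p) ℝ) (l : Fin q) (m : Fin M)
    (μlm μ : Fin p → ℝ) (VM : Matrix (Fin p) (Fin p) ℝ) (u₀ : Fin p → ℝ) (T : ESp p q M) :
    psiCLM cinv s t G l m μlm μ VM u₀ T =
      cinv • (EuclideanSpace.equiv (Fin p) ℝ).symm (G *ᵥ
        (s • clmA l m μlm T + clmB m μ VM u₀ T + t • clmC m μ T)) := by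
  simp only [psiCLM, ContinuousLinearMap.smul_apply, ContinuousLinearMap.comp_apply,
    ContinuousLinearMap.add_apply, ContinuousLinearMap.smul_apply, eqCLM_apply, mvCLM_apply]

end CLMAux
section ExactAux

set_option maxHeartbeats 1000000

variable {p M q : ℕ} {P : Measure Ω} {X : Ω → Fin p → ℝ} {U : Ω → Fin M} {Z : Ω → Fin q}
  {Xs : ℕ → Ω → Fin p → ℝ} {Us : ℕ → Ω → Fin M} {Zs : ℕ → Ω → Fin q}

lemma psi_exact (K : Finset (Fin p)) (l : Fin q) (m : Fin M) (n : ℕ) (ω : Ω)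
    (hn : (n : ℝ) ≠ 0)
    (hNU : NU Us m n ω ≠ 0) (hNZU : NZU Us Zs l m n ω ≠ 0)
    (hpU : pU P U m ≠ 0) (hpZU : pZU P U Z l m ≠ 0)
    (hdethat : IsUnit (AK K * VUhat Xs Us m n ω * (AK K)ᵀ).det)
    (hdet : IsUnit (AK K * VU P X U m * (AK K)ᵀ).det)
    (hI1 : ∀ j, ∫ ω', (if Z ω' = l ∧ U ω' = m then X ω' j else 0) ∂P =
      pZU P U Z l m * muZU P X U Z l m j)
    (hI2 : ∀ j, ∫ ω', (if U ω' = m then X ω' j else 0) ∂P = pU P U m * muU P X U m j)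
    (hI3 : ∫ ω', (if U ω' = m then (1:ℝ) else 0) ∂P = pU P U m)
    (hI4 : ∫ ω', (if Z ω' = l ∧ U ω' = m then (1:ℝ) else 0) ∂P = pZU P U Z l m)
    (hI5 : ∀ a b, ∫ ω', (if U ω' = m then X ω' a * X ω' b else 0) ∂P =
      pU P U m * (VU P X U m a b + muU P X U m a * muU P X U m b)) :
    psiCLM (pUhat Us m n ω)⁻¹ (pcondhat Us Zs l m n ω)⁻¹
        (muUhat Xs Us m n ω ⬝ᵥ (QK K (VU P X U m) *ᵥ (muZU P X U Z l m - muU P X U m)))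
        (1 - VUhat Xs Us m n ω * QK K (VUhat Xs Us m n ω)) l m
        (muZU P X U Z l m) (muU P X U m)
        (VU P X U m + tensor (muU P X U m) (muU P X U m))
        (QK K (VU P X U m) *ᵥ (muZU P X U Z l m - muU P X U m))
        (What P X U Z Xs Us Zs n ω) =
      (EuclideanSpace.equiv (Fin p) ℝ).symm (Real.sqrt n •
        ((1 - VUhat Xs Us m n ω * QK K (VUhat Xs Us m n ω)) *ᵥ
            (muZUhat Xs Us Zs l m n ω - muUhat Xs Us m n ω)
          - Delta P X U Z K l m)) := by
  set W := What P X U Z Xs Us Zs n ω with hW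
  set μ := muU P X U m with hμ
  set μlm := muZU P X U Z l m with hμlm
  set μh := muUhat Xs Us m n ω with hμh
  set μlmh := muZUhat Xs Us Zs l m n ω with hμlmh
  set V := VU P X U m with hV
  set Vh := VUhat Xs Us m n ω with hVh
  set u₀ := QK K V *ᵥ (μlm - μ) with hu₀
  set cN := NU Us m n ω with hcN
  set dN := NZU Us Zs l m n ω with hdN
  have hch : pUhat Us m n ω = cN / n := rfl
  have hc0 : pUhat Us m n ω ≠ 0 := by rw [hch]; exact div_ne_zero hNU hn
  -- L1
  have L1 : (pcondhat Us Zs l m n ω)⁻¹ • clmA l m μlm W =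
      (pUhat Us m n ω * Real.sqrt n) • (μlmh - μlm) := by
    funext j
    have hsum := sum_indZU_X_eq (Xs := Xs) (Us := Us) (Zs := Zs) (l := l) (m := m)
      (n := n) (ω := ω) j
    simp only [hW, Pi.smul_apply, clmA_apply, Pi.sub_apply, smul_eq_mul, What_c1, What_c4,
      hI1 j, hI4, pcondhat, pUhat, hsum]
    field_simp
    have hb := mul_inv_cancel₀ hNZU
    linear_combination (NU Us m n ω * muZUhat Xs Us Zs l m n ω j - NU Us m n ω * μlm j) * hb
  -- L2
  have L2 : clmC m μ W = (pUhat Us m n ω * Real.sqrt n) • (μh - μ) := by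
    funext j
    have hsum := sum_indU_X_eq (Xs := Xs) (Us := Us) (m := m) (n := n) (ω := ω) j
    simp only [hW, clmC_apply, Pi.sub_apply, Pi.smul_apply, smul_eq_mul, What_c2, What_c3,
      hI2 j, hI3, pUhat, hsum]
    field_simp
    ring
  -- L3 matrix identity
  have L3m : Matrix.of (W.2.2.2.2 m) - W.2.2.1 m •
        Matrix.of (V + tensor μ μ) =
      (pUhat Us m n ω * Real.sqrt n) • (Vh - V + tensor μh μh - tensor μ μ) := by
    ext j k
    have hsum := sum_indU_XX_eq (Xs := Xs) (Us := Us) (m := m) (n := n) (ω := ω) j k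
    have hof : (Matrix.of (V + tensor μ μ) : Matrix (Fin p) (Fin p) ℝ) j k =
        V j k + μ j * μ k := rfl
    rw [Matrix.sub_apply, Matrix.smul_apply, hof]
    simp only [hW, Matrix.sub_apply, Matrix.smul_apply, Matrix.of_apply, Matrix.add_apply,
      Pi.add_apply, Pi.smul_apply, smul_eq_mul, What_c5, What_c3, hI5 j k, hI3, pUhat,
      hsum, tensor, Pi.sub_apply]
    field_simp
    ring
  -- inner vector identity
  have hBW := clmB_apply' (q := q) m μ (V + tensor μ μ) u₀ W
  have hCd : (clmC m μ W) ⬝ᵥ u₀ = (pUhat Us m n ω * Real.sqrt n) * ((μh - μ) ⬝ᵥ u₀) := by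
    rw [L2, smul_dotProduct, smul_eq_mul]
  have inner_eq : (pcondhat Us Zs l m n ω)⁻¹ • clmA l m μlm W
      + clmB m μ (V + tensor μ μ) u₀ W
      + (μh ⬝ᵥ u₀) • clmC m μ W =
      (pUhat Us m n ω * Real.sqrt n) • ((μlmh - μlm) - (μh - μ) - (Vh - V) *ᵥ u₀) := by
    rw [L1, hBW, hCd, L3m, L2]
    rw [Matrix.smul_mulVec, Matrix.sub_mulVec, Matrix.add_mulVec, Matrix.sub_mulVec,
      tensor_mulVec, tensor_mulVec]
    have hμd : (μh - μ) ⬝ᵥ u₀ = μh ⬝ᵥ u₀ - μ ⬝ᵥ u₀ := sub_dotProduct μh μ u₀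
    rw [hμd]
    module
  -- conclude
  rw [psiCLM_apply, inner_eq, Matrix.mulVec_smul]
  simp only [_root_.map_smul]
  rw [smul_smul]
  have hsc : (pUhat Us m n ω)⁻¹ * (pUhat Us m n ω * Real.sqrt n) = Real.sqrt n := by
    field_simp
  rw [hsc]
  congr 1
  -- matrix transfer identity
  have hR : (μlmh - μlm) - (μh - μ) - (Vh - V) *ᵥ u₀ =
      (μlmh - μh) - ((μlm - μ) + (Vh - V) *ᵥ u₀) := by module
  rw [hR, Matrix.mulVec_sub]
  congr 1
  have hu : (μlm - μ) + (Vh - V) *ᵥ u₀ = (1 + (Vh - V) * QK K V) *ᵥ (μlm - μ) := by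
    rw [Matrix.add_mulVec, Matrix.one_mulVec, hu₀, ← Matrix.mulVec_mulVec]
  rw [hu, Matrix.mulVec_mulVec, G_transfer K hdethat hdet]
  rfl
end ExactAux
lemma esq_nonneg {p : ℕ} (v : Fin p → ℝ) : 0 ≤ esq v :=
  Finset.sum_nonneg fun i _ => sq_nonneg _

set_option maxHeartbeats 4000000 in
set_option synthInstance.maxHeartbeats 1000000 in
/-- Lemma 2(ii). -/
theorem stmt13
    {Ω : Type} [MeasurableSpace Ω] (P : Measure Ω) [IsProbabilityMeasure P]
    (p q M : ℕ) (hp : 1 ≤ p) (hq : 2 ≤ q) (hM : 1 ≤ M)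
    (X : Ω → Fin p → ℝ) (U : Ω → Fin M) (Z : Ω → Fin q)
    (hX : Measurable X) (hU : Measurable U) (hZ : Measurable Z)
    (hmom : Integrable (fun ω => (∑ i, X ω i ^ 2) ^ 2) P)
    (hpU : ∀ m, 0 < pU P U m) (hpZU : ∀ l m, 0 < pZU P U Z l m)
    (hV : ∀ m, (VU P X U m).PosDef)
    (Xs : ℕ → Ω → Fin p → ℝ) (Us : ℕ → Ω → Fin M) (Zs : ℕ → Ω → Fin q)
    (hiid : IsIIDSample P X U Z Xs Us Zs)
    (K : Finset (Fin p)) (hK : K.Nonempty) (m : Fin M) :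
    ∃ (Phihat : Fin q → ℕ → Ω → (ESp p q M →L[ℝ] ℝ))
      (Psihat : Fin q → ℕ → Ω → (ESp p q M →L[ℝ] EuclideanSpace ℝ (Fin p)))
      (Phi : Fin q → ESp p q M →L[ℝ] ℝ)
      (Psi : Fin q → ESp p q M →L[ℝ] EuclideanSpace ℝ (Fin p)),
      (∀ (l : Fin q) (T : ESp p q M), Phi l T = PhiF P X U Z K l m T) ∧
      (∀ (l : Fin q) (T : ESp p q M),
        EuclideanSpace.equiv (Fin p) ℝ (Psi l T) = PsiF P X U Z K l m T) ∧
      ∀ᵐ ω ∂P,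
        (∀ l : Fin q, Tendsto (fun n => ‖Phihat l n ω - Phi l‖) atTop (nhds 0)) ∧
        (∀ l : Fin q, Tendsto (fun n => ‖Psihat l n ω - Psi l‖) atTop (nhds 0)) ∧
        ∀ᶠ n : ℕ in atTop,
          (n : ℝ) * xiKmhat Xs Us Zs K m n ω =
            ∑ l : Fin q,
              (Phihat l n ω (What P X U Z Xs Us Zs n ω) +
                pcond P U Z l m *
                  ‖Psihat l n ω (What P X U Z Xs Us Zs n ω) +
                    Real.sqrt n •
                      (EuclideanSpace.equiv (Fin p) ℝ).symm (Delta P X U Z K l m)‖) ^ 2 := by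
  have hpU0 : pU P U m ≠ 0 := (hpU m).ne'
  have hpZU0 : ∀ l, pZU P U Z l m ≠ 0 := fun l => (hpZU l m).ne'
  have hpc0 : ∀ l, pcond P U Z l m ≠ 0 := fun l => div_ne_zero (hpZU0 l) hpU0
  -- notation
  set μ := muU P X U m with hμdef
  set V := VU P X U m with hVdef
  have hdetV : IsUnit (AK K * V * (AK K)ᵀ).det := (AK_posDef K (hV m)).det_pos.ne'.isUnit
  -- the deterministic objects
  set u₀ : Fin q → (Fin p → ℝ) :=
    fun l => QK K V *ᵥ (muZU P X U Z l m - μ) with hu₀def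
  refine ⟨(fun l n ω => phiCLM ((pUhat Us m n ω)⁻¹ *
      Real.sqrt (esq ((1 - VUhat Xs Us m n ω * QK K (VUhat Xs Us m n ω)) *ᵥ
        (muZUhat Xs Us Zs l m n ω - muUhat Xs Us m n ω))))
      (-((pUhat Us m n ω)⁻¹ * pcond P U Z l m *
      Real.sqrt (esq ((1 - VUhat Xs Us m n ω * QK K (VUhat Xs Us m n ω)) *ᵥ
        (muZUhat Xs Us Zs l m n ω - muUhat Xs Us m n ω))))) l m),
    (fun l n ω => psiCLM (pUhat Us m n ω)⁻¹ (pcondhat Us Zs l m n ω)⁻¹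
      (muUhat Xs Us m n ω ⬝ᵥ u₀ l)
      (1 - VUhat Xs Us m n ω * QK K (VUhat Xs Us m n ω)) l m
      (muZU P X U Z l m) μ (V + tensor μ μ) (u₀ l)),
    (fun l => phiCLM ((pU P U m)⁻¹ * Real.sqrt (esq (Delta P X U Z K l m)))
      (-((pU P U m)⁻¹ * pcond P U Z l m * Real.sqrt (esq (Delta P X U Z K l m)))) l m),
    (fun l => psiCLM (pU P U m)⁻¹ (pcond P U Z l m)⁻¹ (μ ⬝ᵥ u₀ l)
      (1 - V * QK K V) l m (muZU P X U Z l m) μ (V + tensor μ μ) (u₀ l)),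
    ?_, ?_, ?_⟩
  · -- Phi = PhiF
    intro l T
    rw [phiCLM_apply, PhiF]
    ring
  · -- equiv (Psi l T) = PsiF
    intro l T
    rw [psiCLM_apply, _root_.map_smul, ContinuousLinearEquiv.apply_symm_apply, PsiF]
    rw [← hμdef, ← hVdef]
    congr 1
    congr 1
    rw [clmA_apply, clmB_apply, clmC_apply]
    rw [tensor_mulVec, tensor_mulVec]
    have hof : (T.2.2.1 m • Matrix.of (V + tensor μ μ) : Matrix (Fin p) (Fin p) ℝ)
        = T.2.2.1 m • (V + tensor μ μ) := rfl
    rw [hof]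
    simp only [hu₀def]
    module
  -- a.s. statement
  · -- measurable g's
    have mproj1 : Measurable fun t : (Fin p → ℝ) × Fin M × Fin q => t.2.1 :=
      measurable_fst.comp measurable_snd
    have mproj2 : Measurable fun t : (Fin p → ℝ) × Fin M × Fin q => t.2.2 :=
      measurable_snd.comp measurable_snd
    have msetU : MeasurableSet {t : (Fin p → ℝ) × Fin M × Fin q | t.2.1 = m} :=
      mproj1 (measurableSet_singleton m)
    have msetZU : ∀ l, MeasurableSet {t : (Fin p → ℝ) × Fin M × Fin q |
        t.2.2 = l ∧ t.2.1 = m} := fun l =>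
      (mproj2 (measurableSet_singleton l)).inter (mproj1 (measurableSet_singleton m))
    have mXj : ∀ j, Measurable fun t : (Fin p → ℝ) × Fin M × Fin q => t.1 j := fun j =>
      (measurable_pi_apply j).comp measurable_fst
    -- SLLN for each component
    have hac : ∀ᵐ ω ∂P, Tendsto (fun n : ℕ => NU Us m n ω / n) atTop (nhds (pU P U m)) := by
      have h := slln_comp hiid (fun t => if t.2.1 = m then (1:ℝ) else 0)
        (Measurable.ite msetU measurable_const measurable_const)
        (integrable_indU hU (integrable_const 1) measurable_const m)
      filter_upwards [h] with ω hω
      rw [show (∫ ω', (if (X ω', U ω', Z ω').2.1 = m then (1:ℝ) else 0) ∂P) = pU P U m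
        from integral_indU_one hU m] at hω
      exact hω
    have had : ∀ l, ∀ᵐ ω ∂P, Tendsto (fun n : ℕ => NZU Us Zs l m n ω / n) atTop
        (nhds (pZU P U Z l m)) := by
      intro l
      have h := slln_comp hiid (fun t => if t.2.2 = l ∧ t.2.1 = m then (1:ℝ) else 0)
        (Measurable.ite (msetZU l) measurable_const measurable_const)
        (integrable_indZU hZ hU (integrable_const 1) measurable_const l m)
      filter_upwards [h] with ω hω
      rw [show (∫ ω', (if (X ω', U ω', Z ω').2.2 = l ∧ (X ω', U ω', Z ω').2.1 = m
          then (1:ℝ) else 0) ∂P) = pZU P U Z l m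
        from integral_indZU_one hZ hU l m] at hω
      exact hω
    have hab : ∀ j, ∀ᵐ ω ∂P, Tendsto (fun n : ℕ =>
        (∑ i ∈ Finset.range n, if Us i ω = m then Xs i ω j else 0) / n) atTop
        (nhds (pU P U m * μ j)) := by
      intro j
      have h := slln_comp hiid (fun t => if t.2.1 = m then t.1 j else 0)
        (Measurable.ite msetU (mXj j) measurable_const)
        (integrable_indU hU (integrable_Xj hX hmom j) (measurable_Xi hX j) m)
      filter_upwards [h] with ω hω
      rw [show (∫ ω', (if (X ω', U ω', Z ω').2.1 = m then (X ω', U ω', Z ω').1 j else 0) ∂P)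
        = pU P U m * μ j from integral_indU_X hpU0 j] at hω
      exact hω
    have haa : ∀ l j, ∀ᵐ ω ∂P, Tendsto (fun n : ℕ =>
        (∑ i ∈ Finset.range n, if Zs i ω = l ∧ Us i ω = m then Xs i ω j else 0) / n) atTop
        (nhds (pZU P U Z l m * muZU P X U Z l m j)) := by
      intro l j
      have h := slln_comp hiid (fun t => if t.2.2 = l ∧ t.2.1 = m then t.1 j else 0)
        (Measurable.ite (msetZU l) (mXj j) measurable_const)
        (integrable_indZU hZ hU (integrable_Xj hX hmom j) (measurable_Xi hX j) l m)
      filter_upwards [h] with ω hω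
      rw [show (∫ ω', (if (X ω', U ω', Z ω').2.2 = l ∧ (X ω', U ω', Z ω').2.1 = m
          then (X ω', U ω', Z ω').1 j else 0) ∂P)
        = pZU P U Z l m * muZU P X U Z l m j from integral_indZU_X (hpZU0 l) j] at hω
      exact hω
    have has : ∀ a b : Fin p, ∀ᵐ ω ∂P, Tendsto (fun n : ℕ =>
        (∑ i ∈ Finset.range n, if Us i ω = m then Xs i ω a * Xs i ω b else 0) / n) atTop
        (nhds (pU P U m * (V a b + μ a * μ b))) := by
      intro a b
      have h := slln_comp hiid (fun t => if t.2.1 = m then t.1 a * t.1 b else 0)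
        (Measurable.ite msetU ((mXj a).mul (mXj b)) measurable_const)
        (integrable_indU hU (integrable_XjXk hX hmom a b)
          ((measurable_Xi hX a).mul (measurable_Xi hX b)) m)
      filter_upwards [h] with ω hω
      rw [show (∫ ω', (if (X ω', U ω', Z ω').2.1 = m
          then (X ω', U ω', Z ω').1 a * (X ω', U ω', Z ω').1 b else 0) ∂P)
        = pU P U m * (V a b + μ a * μ b) from integral_indU_XX hX hU hmom hpU0 a b] at hω
      exact hω
    filter_upwards [hac, ae_all_iff.2 had, ae_all_iff.2 hab,
      ae_all_iff.2 (fun l => ae_all_iff.2 (haa l)),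
      ae_all_iff.2 (fun a => ae_all_iff.2 (has a))] with ω hcT hdT hbT haT hsT
    -- pointwise consequences
    have hμhT : Tendsto (fun n => muUhat Xs Us m n ω) atTop (nhds μ) := by
      rw [tendsto_pi_nhds]
      intro j
      have h := tendsto_ratio (hbT j) hcT hpU0
      rw [mul_div_cancel_left₀ _ hpU0] at h
      exact h.congr fun n => (div_eq_inv_mul _ _).trans rfl
    have hμlmhT : ∀ l, Tendsto (fun n => muZUhat Xs Us Zs l m n ω) atTop
        (nhds (muZU P X U Z l m)) := by
      intro l
      rw [tendsto_pi_nhds]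
      intro j
      have h := tendsto_ratio (haT l j) (hdT l) (hpZU0 l)
      rw [mul_div_cancel_left₀ _ (hpZU0 l)] at h
      exact h.congr fun n => (div_eq_inv_mul _ _).trans rfl
    have hpchT : ∀ l, Tendsto (fun n => pcondhat Us Zs l m n ω) atTop
        (nhds (pcond P U Z l m)) := fun l => tendsto_ratio (hdT l) hcT hpU0
    have hNUev : ∀ᶠ n : ℕ in atTop, NU Us m n ω ≠ 0 := by
      filter_upwards [hcT.eventually_ne hpU0] with n hn
      intro h0
      rw [h0, zero_div] at hn
      exact hn rfl
    have hVhT : Tendsto (fun n => VUhat Xs Us m n ω) atTop (nhds V) := by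
      refine tendsto_pi_nhds.2 fun a => ?_
      refine tendsto_pi_nhds.2 fun b => ?_
      have h1 := (tendsto_ratio (hsT a b) hcT hpU0).sub
        ((tendsto_pi_nhds.1 hμhT a).mul (tendsto_pi_nhds.1 hμhT b))
      have hlim : pU P U m * (V a b + μ a * μ b) / pU P U m - μ a * μ b = V a b := by
        field_simp
        ring
      rw [hlim] at h1
      apply h1.congr'
      filter_upwards [hNUev] with n hn
      have hsum := sum_indU_XX_eq (Xs := Xs) (Us := Us) (m := m) (n := n) (ω := ω) a b
      rw [hsum, mul_div_cancel_left₀ _ hn]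
      ring
    have hQhT : Tendsto (fun n => QK K (VUhat Xs Us m n ω)) atTop (nhds (QK K V)) :=
      tendsto_QK K hVhT hdetV
    have hGhT : Tendsto (fun n => 1 - VUhat Xs Us m n ω * QK K (VUhat Xs Us m n ω)) atTop
        (nhds (1 - V * QK K V)) :=
      tendsto_const_nhds.sub (tendsto_matMul hVhT hQhT)
    have hΔhT : ∀ l, Tendsto (fun n => (1 - VUhat Xs Us m n ω * QK K (VUhat Xs Us m n ω)) *ᵥ
        (muZUhat Xs Us Zs l m n ω - muUhat Xs Us m n ω)) atTop
        (nhds (Delta P X U Z K l m)) := fun l =>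
      tendsto_mulVec hGhT ((hμlmhT l).sub hμhT)
    have hrT : ∀ l, Tendsto (fun n =>
        Real.sqrt (esq ((1 - VUhat Xs Us m n ω * QK K (VUhat Xs Us m n ω)) *ᵥ
          (muZUhat Xs Us Zs l m n ω - muUhat Xs Us m n ω)))) atTop
        (nhds (Real.sqrt (esq (Delta P X U Z K l m)))) := by
      intro l
      apply (Real.continuous_sqrt.tendsto _).comp
      simp only [esq]
      exact tendsto_finset_sum _ fun i _ => (tendsto_pi_nhds.1 (hΔhT l) i).pow 2
    have hcinvT : Tendsto (fun n => (pUhat Us m n ω)⁻¹) atTop (nhds (pU P U m)⁻¹) :=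
      hcT.inv₀ hpU0
    refine ⟨?_, ?_, ?_⟩
    · -- Phihat convergence
      intro l
      rw [← tendsto_iff_norm_sub_tendsto_zero]
      have hα : Tendsto (fun n => (pUhat Us m n ω)⁻¹ *
          Real.sqrt (esq ((1 - VUhat Xs Us m n ω * QK K (VUhat Xs Us m n ω)) *ᵥ
            (muZUhat Xs Us Zs l m n ω - muUhat Xs Us m n ω)))) atTop
          (nhds ((pU P U m)⁻¹ * Real.sqrt (esq (Delta P X U Z K l m)))) :=
        hcinvT.mul (hrT l)
      have hβ : Tendsto (fun n => -((pUhat Us m n ω)⁻¹ * pcond P U Z l m *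
          Real.sqrt (esq ((1 - VUhat Xs Us m n ω * QK K (VUhat Xs Us m n ω)) *ᵥ
            (muZUhat Xs Us Zs l m n ω - muUhat Xs Us m n ω))))) atTop
          (nhds (-((pU P U m)⁻¹ * pcond P U Z l m *
            Real.sqrt (esq (Delta P X U Z K l m))))) :=
        ((hcinvT.mul tendsto_const_nhds).mul (hrT l)).neg
      exact (hα.smul_const (pi4CLM l m)).add (hβ.smul_const (pi3CLM m))
    · -- Psihat convergence
      intro l
      rw [← tendsto_iff_norm_sub_tendsto_zero]
      have hsinv : Tendsto (fun n => (pcondhat Us Zs l m n ω)⁻¹) atTop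
          (nhds (pcond P U Z l m)⁻¹) := (hpchT l).inv₀ (hpc0 l)
      have ht : Tendsto (fun n => muUhat Xs Us m n ω ⬝ᵥ u₀ l) atTop (nhds (μ ⬝ᵥ u₀ l)) := by
        simp only [dotProduct]
        exact tendsto_finset_sum _ fun i _ =>
          (tendsto_pi_nhds.1 hμhT i).mul tendsto_const_nhds
      have hinner : Tendsto (fun n => (pcondhat Us Zs l m n ω)⁻¹ •
          clmA (p := p) (q := q) (M := M) l m (muZU P X U Z l m)
          + clmB m μ (V + tensor μ μ) (u₀ l)
          + (muUhat Xs Us m n ω ⬝ᵥ u₀ l) • clmC m μ) atTop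
          (nhds ((pcond P U Z l m)⁻¹ • clmA l m (muZU P X U Z l m)
            + clmB m μ (V + tensor μ μ) (u₀ l) + (μ ⬝ᵥ u₀ l) • clmC m μ)) :=
        ((hsinv.smul_const _).add tendsto_const_nhds).add (ht.smul_const _)
      exact hcinvT.smul (tendsto_clm_comp tendsto_const_nhds
        (tendsto_clm_comp (tendsto_mvCLM hGhT) hinner))
    · -- eventual identity
      have hdetev : ∀ᶠ n : ℕ in atTop,
          IsUnit (AK K * VUhat Xs Us m n ω * (AK K)ᵀ).det := by
        have hBT : Tendsto (fun n => AK K * VUhat Xs Us m n ω * (AK K)ᵀ) atTop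
            (nhds (AK K * V * (AK K)ᵀ)) :=
          tendsto_matMul (tendsto_matMul tendsto_const_nhds hVhT) tendsto_const_nhds
        have hdT2 : Tendsto (fun n => (AK K * VUhat Xs Us m n ω * (AK K)ᵀ).det) atTop
            (nhds ((AK K * V * (AK K)ᵀ).det)) :=
          ((continuous_id.matrix_det).tendsto _).comp hBT
        filter_upwards [hdT2.eventually_ne (IsUnit.ne_zero hdetV)] with n hn
        exact isUnit_iff_ne_zero.2 hn
      have hNZUev : ∀ᶠ n : ℕ in atTop, ∀ l, NZU Us Zs l m n ω ≠ 0 := by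
        rw [Filter.eventually_all]
        intro l
        filter_upwards [(hdT l).eventually_ne (hpZU0 l)] with n hn
        intro h0
        rw [h0, zero_div] at hn
        exact hn rfl
      filter_upwards [hNUev, hNZUev, hdetev, eventually_ge_atTop 1]
        with n hNU hNZU hdethat hn1
      have hn0 : (n : ℝ) ≠ 0 := Nat.cast_ne_zero.2 (by omega)
      rw [xiKmhat, Finset.mul_sum]
      refine Finset.sum_congr rfl fun l _ => ?_
      -- the exact Psi identity
      have hPsiW := psi_exact (P := P) (X := X) (U := U) (Z := Z)
        (Xs := Xs) (Us := Us) (Zs := Zs) K l m n ω hn0 hNU (hNZU l) hpU0 (hpZU0 l)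
        hdethat hdetV
        (fun j => integral_indZU_X (hpZU0 l) j)
        (fun j => integral_indU_X hpU0 j)
        (integral_indU_one hU m) (integral_indZU_one hZ hU l m)
        (fun a b => integral_indU_XX hX hU hmom hpU0 a b)
      set rh := Real.sqrt (esq ((1 - VUhat Xs Us m n ω * QK K (VUhat Xs Us m n ω)) *ᵥ
        (muZUhat Xs Us Zs l m n ω - muUhat Xs Us m n ω))) with hrdef
      -- Phihat value
      have hPhiW : phiCLM ((pUhat Us m n ω)⁻¹ * rh)
          (-((pUhat Us m n ω)⁻¹ * pcond P U Z l m * rh)) l m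
          (What P X U Z Xs Us Zs n ω) =
          Real.sqrt n * (pcondhat Us Zs l m n ω - pcond P U Z l m) * rh := by
        rw [phiCLM_apply, What_c3, What_c4, integral_indU_one hU m,
          integral_indZU_one hZ hU l m]
        have hpcondhat : pcondhat Us Zs l m n ω = NZU Us Zs l m n ω / NU Us m n ω := rfl
        have hpUhat : pUhat Us m n ω = NU Us m n ω / n := rfl
        have hpcond : pcond P U Z l m = pZU P U Z l m / pU P U m := rfl
        rw [hpcondhat, hpUhat, hpcond]
        field_simp
        ring
      -- assemble
      rw [hPhiW, hPsiW]
      have hplus : (EuclideanSpace.equiv (Fin p) ℝ).symm (Real.sqrt n •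
          ((1 - VUhat Xs Us m n ω * QK K (VUhat Xs Us m n ω)) *ᵥ
            (muZUhat Xs Us Zs l m n ω - muUhat Xs Us m n ω) - Delta P X U Z K l m))
          + Real.sqrt n • (EuclideanSpace.equiv (Fin p) ℝ).symm (Delta P X U Z K l m)
          = (EuclideanSpace.equiv (Fin p) ℝ).symm (Real.sqrt n •
            ((1 - VUhat Xs Us m n ω * QK K (VUhat Xs Us m n ω)) *ᵥ
              (muZUhat Xs Us Zs l m n ω - muUhat Xs Us m n ω))) := by
        rw [← _root_.map_smul, ← _root_.map_add]
        congr 1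
        rw [smul_sub]
        abel
      rw [hplus]
      have hnorm : ‖(EuclideanSpace.equiv (Fin p) ℝ).symm (Real.sqrt n •
          ((1 - VUhat Xs Us m n ω * QK K (VUhat Xs Us m n ω)) *ᵥ
            (muZUhat Xs Us Zs l m n ω - muUhat Xs Us m n ω)))‖ = Real.sqrt n * rh := by
        rw [EuclideanSpace.norm_eq]
        have hcoords : ∀ i : Fin p, ‖((EuclideanSpace.equiv (Fin p) ℝ).symm (Real.sqrt n •
            ((1 - VUhat Xs Us m n ω * QK K (VUhat Xs Us m n ω)) *ᵥ
              (muZUhat Xs Us Zs l m n ω - muUhat Xs Us m n ω)))) i‖ ^ 2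
            = (n : ℝ) * (((1 - VUhat Xs Us m n ω * QK K (VUhat Xs Us m n ω)) *ᵥ
              (muZUhat Xs Us Zs l m n ω - muUhat Xs Us m n ω)) i) ^ 2 := by
          intro i
          rw [Real.norm_eq_abs, sq_abs]
          show (Real.sqrt n * _) ^ 2 = _
          rw [mul_pow, Real.sq_sqrt (Nat.cast_nonneg n)]
        rw [Finset.sum_congr rfl fun i _ => hcoords i, ← Finset.mul_sum,
          Real.sqrt_mul (Nat.cast_nonneg n), hrdef]
        rfl
      rw [hnorm]
      have he1 : rh ^ 2 = esq ((1 - VUhat Xs Us m n ω * QK K (VUhat Xs Us m n ω)) *ᵥ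
          (muZUhat Xs Us Zs l m n ω - muUhat Xs Us m n ω)) :=
        Real.sq_sqrt (esq_nonneg _)
      have he2 : Real.sqrt n ^ 2 = (n : ℝ) := Real.sq_sqrt (Nat.cast_nonneg n)
      have hrw : (Real.sqrt ↑n * (pcondhat Us Zs l m n ω - pcond P U Z l m) * rh +
          pcond P U Z l m * (Real.sqrt ↑n * rh))
          = Real.sqrt ↑n * pcondhat Us Zs l m n ω * rh := by ring
      rw [hrw]
      rw [show (Real.sqrt ↑n * pcondhat Us Zs l m n ω * rh) ^ 2
        = Real.sqrt ↑n ^ 2 * pcondhat Us Zs l m n ω ^ 2 * rh ^ 2 from by ring, he1, he2]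
      ring

end ArxivStmt
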